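/- For ρ ∈ (0,1] and real r > 0, the coefficients c_k in the power series expansion (-ln(1-ρu)/(ρu))^r = 1 + ∑_{k=1}^∞ c_k u^k satisfy 0 < c_k < binomial(r+k-1, k) ρ^k = (r(r+1)⋯(r+k-1)/k!) ρ^k for all k ≥ 1. -/

import Mathlib

open PowerSeries Finset

namespace Stmt17


noncomputable def Acs : PowerSeries ℝ := PowerSeries.mk fun k => 1 / ((k+1)*(k+2) : ℝ)
noncomputable def Bs : PowerSeries ℝ := PowerSeries.mk fun k => 1 / ((k+2) : ℝ)
noncomputable def Vs : PowerSeries ℝ := PowerSeries.mk fun _ => (1 : ℝ)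
noncomputable def Us : PowerSeries ℝ := (1 - PowerSeries.X * Acs)⁻¹

lemma coeff_Acs (k : ℕ) : PowerSeries.coeff (R := ℝ) k Acs = 1 / ((k+1)*(k+2) : ℝ) := by
  simp [Acs]

lemma coeff_Acs_pos (k : ℕ) : 0 < PowerSeries.coeff (R := ℝ) k Acs := by
  rw [coeff_Acs]; positivity

lemma constCoeff_aux : constantCoeff (R := ℝ) (1 - PowerSeries.X * Acs) = 1 := by
  simp

lemma h_unit : (1 - PowerSeries.X * Acs) * Us = 1 :=
  PowerSeries.mul_inv_cancel _ (by rw [constCoeff_aux]; exact one_ne_zero)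

lemma h_unit' : Us * (1 - PowerSeries.X * Acs) = 1 := by
  rw [mul_comm]; exact h_unit

lemma constCoeff_Us : constantCoeff (R := ℝ) Us = 1 := by
  have := congrArg (constantCoeff (R := ℝ)) h_unit
  simpa [constCoeff_aux] using this

lemma Us_eq : Us = 1 + PowerSeries.X * (Acs * Us) := by
  have h : Us - PowerSeries.X * (Acs * Us) = 1 := by
    rw [← h_unit]; ring
  linear_combination h

lemma coeff_Us_nonneg (n : ℕ) : 0 ≤ PowerSeries.coeff (R := ℝ) n Us := by
  induction n using Nat.strong_induction_on with
  | _ n ih =>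
    rw [Us_eq]
    cases n with
    | zero => simp
    | succ n =>
      rw [map_add, PowerSeries.coeff_succ_X_mul, PowerSeries.coeff_mul]
      have h1 : (PowerSeries.coeff (R := ℝ) (n+1)) (1 : PowerSeries ℝ) = 0 := by
        simp [PowerSeries.coeff_one]
      rw [h1, zero_add]
      apply Finset.sum_nonneg
      intro p hp
      rw [Finset.HasAntidiagonal.mem_antidiagonal] at hp
      have hp2 : p.2 ≤ n := by omega
      exact mul_nonneg (coeff_Acs_pos p.1).le (ih p.2 (by omega))

noncomputable def ell (n : ℕ) : ℝ := PowerSeries.coeff (R := ℝ) n (Acs * Us)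

lemma coeff_AU_nonneg (n : ℕ) : 0 ≤ PowerSeries.coeff (R := ℝ) n (Acs * Us) := by
  rw [PowerSeries.coeff_mul]
  apply Finset.sum_nonneg
  intro p hp
  exact mul_nonneg (coeff_Acs_pos p.1).le (coeff_Us_nonneg p.2)

lemma ell_pos (n : ℕ) : 0 < ell n := by
  rw [ell, PowerSeries.coeff_mul]
  apply Finset.sum_pos'
  · intro p hp
    exact mul_nonneg (coeff_Acs_pos p.1).le (coeff_Us_nonneg p.2)
  · refine ⟨(n, 0), by simp [Finset.mem_antidiagonal], ?_⟩
    have : PowerSeries.coeff (R := ℝ) 0 Us = 1 := by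
      simp [PowerSeries.coeff_zero_eq_constantCoeff, constCoeff_Us]
    simp only [this, mul_one]
    exact coeff_Acs_pos n

lemma hV : Vs * (1 - PowerSeries.X) = 1 := by
  ext n
  rw [mul_sub, mul_one, map_sub]
  cases n with
  | zero => simp [Vs]
  | succ n => simp [Vs, PowerSeries.coeff_succ_mul_X, PowerSeries.coeff_one]

lemma hABV : (Acs + Bs) * (1 - PowerSeries.X) = 1 - PowerSeries.X * Acs := by
  ext n
  rw [mul_sub, mul_one, map_sub, map_sub, map_add]
  cases n with
  | zero =>
    simp [Acs, Bs]
    norm_num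
  | succ n =>
    rw [PowerSeries.coeff_succ_mul_X, PowerSeries.coeff_succ_X_mul, map_add]
    simp only [Acs, Bs, PowerSeries.coeff_mk, PowerSeries.coeff_one, Nat.succ_ne_zero,
      if_false]
    push_cast
    have h1 : (n:ℝ) + 1 > 0 := by positivity
    have h2 : (n:ℝ) + 2 > 0 := by positivity
    have h3 : (n:ℝ) + 3 > 0 := by positivity
    field_simp
    ring

lemma oneSubX_ne : (1 - PowerSeries.X : PowerSeries ℝ) ≠ 0 := by
  intro h
  have := congrArg (constantCoeff (R := ℝ)) h
  simp at this

lemma hABU : (Acs + Bs) * Us = Vs := by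
  have h1 : ((Acs + Bs) * Us) * (1 - PowerSeries.X) = Vs * (1 - PowerSeries.X) := by
    calc ((Acs + Bs) * Us) * (1 - PowerSeries.X)
        = ((Acs + Bs) * (1 - PowerSeries.X)) * Us := by ring
      _ = (1 - PowerSeries.X * Acs) * Us := by rw [hABV]
      _ = 1 := h_unit
      _ = Vs * (1 - PowerSeries.X) := hV.symm
  exact mul_right_cancel₀ oneSubX_ne h1

lemma ell_lt_one (n : ℕ) : ell n < 1 := by
  have h := congrArg (PowerSeries.coeff (R := ℝ) n) hABU
  rw [add_mul, map_add] at h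
  have hV : PowerSeries.coeff (R := ℝ) n Vs = 1 := by simp [Vs]
  have hBU : 0 < PowerSeries.coeff (R := ℝ) n (Bs * Us) := by
    rw [PowerSeries.coeff_mul]
    apply Finset.sum_pos'
    · intro p hp
      apply mul_nonneg _ (coeff_Us_nonneg p.2)
      simp only [Bs, PowerSeries.coeff_mk]
      positivity
    · refine ⟨(n, 0), by simp [Finset.mem_antidiagonal], ?_⟩
      have h0 : PowerSeries.coeff (R := ℝ) 0 Us = 1 := by
        simp [PowerSeries.coeff_zero_eq_constantCoeff, constCoeff_Us]
      simp only [h0, mul_one, Bs, PowerSeries.coeff_mk]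
      positivity
  rw [hV] at h
  have : ell n + PowerSeries.coeff (R := ℝ) n (Bs * Us) = 1 := h
  linarith


lemma ell_def (n : ℕ) : ell n = PowerSeries.coeff (R := ℝ) n (Acs * Us) := rfl

lemma coeff_Vs (n : ℕ) : PowerSeries.coeff (R := ℝ) n Vs = 1 := by simp [Vs]

-- placeholders from part1

noncomputable def Lfs : PowerSeries ℝ :=
  PowerSeries.mk fun n => if n = 0 then 0 else ell (n-1) / (n : ℝ)
noncomputable def Ms : PowerSeries ℝ :=
  PowerSeries.mk fun n => if n = 0 then 0 else 1 / (n : ℝ)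
noncomputable def f0s : PowerSeries ℝ := PowerSeries.mk fun n => 1 / ((n:ℝ)+1)

lemma constCoeff_Lfs : constantCoeff (R := ℝ) Lfs = 0 := by simp [Lfs]
lemma constCoeff_Ms : constantCoeff (R := ℝ) Ms = 0 := by simp [Ms]

lemma coeff_Lfs_succ (n : ℕ) :
    PowerSeries.coeff (R := ℝ) (n+1) Lfs = ell n / ((n:ℝ)+1) := by
  simp [Lfs]

lemma coeff_Lfs_nonneg (k : ℕ) : 0 ≤ PowerSeries.coeff (R := ℝ) k Lfs := by
  cases k with
  | zero => simp [Lfs]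
  | succ n =>
    rw [coeff_Lfs_succ]
    have := ell_pos n
    positivity

lemma coeff_Lfs_le_Ms (k : ℕ) : PowerSeries.coeff (R := ℝ) k Lfs ≤ PowerSeries.coeff (R := ℝ) k Ms := by
  cases k with
  | zero => simp [Lfs, Ms]
  | succ n =>
    rw [coeff_Lfs_succ]
    have h : PowerSeries.coeff (R := ℝ) (n+1) Ms = 1 / ((n:ℝ)+1) := by
      simp [Ms]
    rw [h]
    gcongr
    exact (ell_lt_one n).le

lemma ell_zero : ell 0 = 1/2 := by
  rw [ell_def, PowerSeries.coeff_zero_eq_constantCoeff, map_mul]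
  have hA : constantCoeff (R := ℝ) Acs = 1/2 := by
    rw [← PowerSeries.coeff_zero_eq_constantCoeff, coeff_Acs]; norm_num
  rw [hA, constCoeff_Us]; norm_num

lemma coeff_Lfs_one : PowerSeries.coeff (R := ℝ) 1 Lfs = 1/2 := by
  have h := coeff_Lfs_succ 0
  simpa [ell_zero] using h

lemma coeff_Ms_one : PowerSeries.coeff (R := ℝ) 1 Ms = 1 := by
  simp [Ms]

lemma dLfs : (d⁄dX ℝ) Lfs = Acs * Us := by
  ext n
  rw [PowerSeries.coeff_derivative, coeff_Lfs_succ, ← ell_def]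
  have h1 : ((n:ℝ)+1) ≠ 0 := by positivity
  field_simp

lemma dMs : (d⁄dX ℝ) Ms = Vs := by
  ext n
  rw [PowerSeries.coeff_derivative, coeff_Vs]
  simp only [Ms, PowerSeries.coeff_mk, Nat.succ_ne_zero, if_false]
  push_cast
  have h1 : ((n:ℝ)+1) ≠ 0 := by positivity
  field_simp

lemma h1f : (1 - PowerSeries.X) * f0s = 1 - PowerSeries.X * Acs := by
  ext n
  rw [sub_mul, one_mul, map_sub, map_sub]
  cases n with
  | zero => simp [f0s]
  | succ n =>
    rw [PowerSeries.coeff_succ_X_mul, PowerSeries.coeff_succ_X_mul, coeff_Acs]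
    simp only [f0s, PowerSeries.coeff_mk, PowerSeries.coeff_one, Nat.succ_ne_zero, if_false]
    push_cast
    have h1 : ((n:ℝ)+1) ≠ 0 := by positivity
    have h2 : ((n:ℝ)+2) ≠ 0 := by positivity
    field_simp
    ring

lemma h2f : (1 - PowerSeries.X) * ((d⁄dX ℝ) f0s) = Acs := by
  ext n
  rw [sub_mul, one_mul, map_sub, coeff_Acs]
  cases n with
  | zero =>
    simp [f0s, PowerSeries.coeff_derivative]
    norm_num
  | succ n =>
    rw [PowerSeries.coeff_succ_X_mul, PowerSeries.coeff_derivative,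
      PowerSeries.coeff_derivative]
    simp only [f0s, PowerSeries.coeff_mk]
    push_cast
    have h1 : ((n:ℝ)+2) ≠ 0 := by positivity
    have h2 : ((n:ℝ)+3) ≠ 0 := by positivity
    have h3 : ((n:ℝ)+1) ≠ 0 := by positivity
    field_simp
    ring

lemma h3f : Acs * Us * f0s = (d⁄dX ℝ) f0s := by
  calc Acs * Us * f0s = ((1 - PowerSeries.X) * ((d⁄dX ℝ) f0s)) * Us * f0s := by rw [h2f]
    _ = ((d⁄dX ℝ) f0s) * (((1 - PowerSeries.X) * f0s) * Us) := by ring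
    _ = ((d⁄dX ℝ) f0s) * ((1 - PowerSeries.X * Acs) * Us) := by rw [h1f]
    _ = (d⁄dX ℝ) f0s := by rw [h_unit, mul_one]


lemma coeff_f0s (n : ℕ) : PowerSeries.coeff (R := ℝ) n f0s = 1 / ((n:ℝ)+1) := by simp [f0s]

lemma coeff_Ms_le_one (k : ℕ) : PowerSeries.coeff (R := ℝ) k Ms ≤ 1 := by
  cases k with
  | zero => simp [Ms]
  | succ n =>
    have h : PowerSeries.coeff (R := ℝ) (n+1) Ms = 1 / (((n+1):ℕ):ℝ) := by simp [Ms]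
    rw [h]
    rw [div_le_one (by positivity)]
    push_cast
    linarith [Nat.cast_nonneg (α := ℝ) n]

lemma coeff_Lfs_le_one (k : ℕ) : PowerSeries.coeff (R := ℝ) k Lfs ≤ 1 :=
  (coeff_Lfs_le_Ms k).trans (coeff_Ms_le_one k)


lemma coeff_pow_nonneg {S : PowerSeries ℝ} (hS : ∀ k, 0 ≤ PowerSeries.coeff (R := ℝ) k S)
    (m n : ℕ) : 0 ≤ PowerSeries.coeff (R := ℝ) n (S ^ m) := by
  induction m generalizing n with
  | zero =>
    rw [pow_zero, PowerSeries.coeff_one]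
    split <;> norm_num
  | succ m ih =>
    rw [pow_succ, PowerSeries.coeff_mul]
    exact Finset.sum_nonneg fun p hp => mul_nonneg (ih p.1) (hS p.2)

lemma coeff_pow_mono {S T : PowerSeries ℝ} (hS : ∀ k, 0 ≤ PowerSeries.coeff (R := ℝ) k S)
    (hST : ∀ k, PowerSeries.coeff (R := ℝ) k S ≤ PowerSeries.coeff (R := ℝ) k T)
    (m n : ℕ) : PowerSeries.coeff (R := ℝ) n (S ^ m) ≤ PowerSeries.coeff (R := ℝ) n (T ^ m) := by
  have hT : ∀ k, 0 ≤ PowerSeries.coeff (R := ℝ) k T := fun k => (hS k).trans (hST k)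
  induction m generalizing n with
  | zero => rw [pow_zero, pow_zero]
  | succ m ih =>
    rw [pow_succ, pow_succ, PowerSeries.coeff_mul, PowerSeries.coeff_mul]
    apply Finset.sum_le_sum
    intro p hp
    exact mul_le_mul (ih p.1) (hST p.2) (hS p.2) (coeff_pow_nonneg hT m p.1)

lemma coeff_pow_zero_of_lt {S : PowerSeries ℝ} (hS : constantCoeff (R := ℝ) S = 0) :
    ∀ m n : ℕ, n < m → PowerSeries.coeff (R := ℝ) n (S ^ m) = 0 := by
  intro m
  induction m with
  | zero => intro n hn; omega
  | succ m ih =>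
    intro n hn
    rw [pow_succ, PowerSeries.coeff_mul]
    apply Finset.sum_eq_zero
    intro p hp
    rw [Finset.HasAntidiagonal.mem_antidiagonal] at hp
    rcases Nat.eq_zero_or_pos p.2 with h2 | h2
    · have : PowerSeries.coeff (R := ℝ) p.2 S = 0 := by
        rw [h2, PowerSeries.coeff_zero_eq_constantCoeff, hS]
      rw [this, mul_zero]
    · have : p.1 < m := by omega
      rw [ih p.1 this, zero_mul]

lemma coeff_pow_self {S : PowerSeries ℝ} (hS : constantCoeff (R := ℝ) S = 0) (n : ℕ) :
    PowerSeries.coeff (R := ℝ) n (S ^ n) = (PowerSeries.coeff (R := ℝ) 1 S) ^ n := by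
  induction n with
  | zero => simp
  | succ n ih =>
    rw [pow_succ, PowerSeries.coeff_mul]
    rw [Finset.sum_eq_single (n, 1)]
    · rw [ih, pow_succ]
    · intro p hp hne
      rw [Finset.HasAntidiagonal.mem_antidiagonal] at hp
      rcases Nat.lt_or_ge p.1 n with h | h
      · rw [coeff_pow_zero_of_lt hS n p.1 h, zero_mul]
      · have h1 : p.1 = n + 1 ∧ p.2 = 0 := by
          rcases Nat.eq_or_lt_of_le h with h' | h'
          · exfalso; apply hne
            have : p.2 = 1 := by omega
            exact Prod.ext h'.symm this
          · constructor <;> omega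
        rw [h1.2, PowerSeries.coeff_zero_eq_constantCoeff, hS, mul_zero]
    · intro h
      exfalso; apply h
      rw [Finset.HasAntidiagonal.mem_antidiagonal]

noncomputable def ec (r : ℝ) (S : PowerSeries ℝ) (n : ℕ) : ℝ :=
  ∑ m ∈ Finset.range (n+1), r ^ m / (m.factorial : ℝ) * PowerSeries.coeff (R := ℝ) n (S ^ m)

lemma ec_zero (r : ℝ) (S : PowerSeries ℝ) : ec r S 0 = 1 := by
  simp [ec]

lemma ec_rec (r : ℝ) (S : PowerSeries ℝ) (hS : constantCoeff (R := ℝ) S = 0) (n : ℕ) :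
    ((n:ℝ)+1) * ec r S (n+1) =
      r * ∑ p ∈ Finset.HasAntidiagonal.antidiagonal n, ec r S p.1 * PowerSeries.coeff (R := ℝ) p.2 ((d⁄dX ℝ) S) := by
  have key : ∀ m : ℕ, PowerSeries.coeff (R := ℝ) (n+1) (S ^ (m+1)) * ((n:ℝ)+1)
      = ((m:ℝ)+1) * PowerSeries.coeff (R := ℝ) n (S ^ m * (d⁄dX ℝ) S) := by
    intro m
    have hd : (d⁄dX ℝ) (S ^ (m+1)) = (m+1) • (S ^ m * (d⁄dX ℝ) S) := by
      have := Derivation.leibniz_pow (d⁄dX ℝ) (a := S) (m+1)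
      simpa [smul_eq_mul] using this
    have h1 := PowerSeries.coeff_derivative (S ^ (m+1)) n
    rw [hd] at h1
    rw [← h1]
    push_cast [map_nsmul]
    ring
  rw [ec, Finset.mul_sum]
  rw [Finset.sum_range_succ']
  have hzero : ((n:ℝ)+1) * (r ^ 0 / (Nat.factorial 0 : ℝ) * PowerSeries.coeff (R := ℝ) (n+1) (S ^ 0)) = 0 := by
    simp [PowerSeries.coeff_one]
  rw [hzero, add_zero]
  have hterm : ∀ m ∈ Finset.range (n+1),
      ((n:ℝ)+1) * (r ^ (m+1) / ((m+1).factorial : ℝ) * PowerSeries.coeff (R := ℝ) (n+1) (S ^ (m+1)))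
      = r * (r ^ m / (m.factorial : ℝ) * PowerSeries.coeff (R := ℝ) n (S ^ m * (d⁄dX ℝ) S)) := by
    intro m _
    have hk := key m
    have hfac : ((m+1).factorial : ℝ) = ((m:ℝ)+1) * (m.factorial : ℝ) := by
      rw [Nat.factorial_succ]; push_cast; ring
    have hm1 : ((m:ℝ)+1) ≠ 0 := by positivity
    have hf : (m.factorial : ℝ) ≠ 0 := by
      exact_mod_cast Nat.factorial_ne_zero m
    have h2 : ((n:ℝ)+1) * (r ^ (m+1) / (((m+1).factorial : ℕ) : ℝ) * PowerSeries.coeff (R := ℝ) (n+1) (S ^ (m+1)))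
        = r ^ (m+1) / (((m+1).factorial : ℕ) : ℝ) * (PowerSeries.coeff (R := ℝ) (n+1) (S ^ (m+1)) * ((n:ℝ)+1)) := by
      ring
    rw [h2, hk, hfac, pow_succ]
    field_simp
  rw [Finset.sum_congr rfl hterm]
  rw [← Finset.mul_sum]
  congr 1
  -- ∑_{m ∈ range (n+1)} r^m/m! * coeff n (S^m * dS) = ∑_{p ∈ antidiagonal n} ec r S p.1 * dS_{p.2}
  have hcm : ∀ m, PowerSeries.coeff (R := ℝ) n (S ^ m * (d⁄dX ℝ) S)
      = ∑ p ∈ Finset.HasAntidiagonal.antidiagonal n, PowerSeries.coeff (R := ℝ) p.1 (S ^ m) * PowerSeries.coeff (R := ℝ) p.2 ((d⁄dX ℝ) S) :=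
    fun m => PowerSeries.coeff_mul n _ _
  simp_rw [hcm, Finset.mul_sum]
  rw [Finset.sum_comm]
  apply Finset.sum_congr rfl
  intro p hp
  rw [Finset.HasAntidiagonal.mem_antidiagonal] at hp
  have hp1 : p.1 ≤ n := by omega
  rw [ec]
  rw [Finset.sum_mul]
  -- extend range (p.1+1) to range (n+1)
  rw [Finset.sum_subset (Finset.range_subset_range.2 (by omega : p.1 + 1 ≤ n + 1))]
  · apply Finset.sum_congr rfl
    intro m _
    ring
  · intro m hm hnm
    rw [Finset.mem_range] at hm hnm
    have : p.1 < m := by omega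
    rw [coeff_pow_zero_of_lt hS m p.1 this]
    ring





variable {r : ℝ}

lemma w_rec' (r : ℝ) (n : ℕ) :
    ((n:ℝ)+1) * ec r Ms (n+1) = r * ∑ j ∈ Finset.range (n+1), ec r Ms j := by
  rw [ec_rec r Ms constCoeff_Ms n, dMs]
  congr 1
  rw [Finset.Nat.sum_antidiagonal_eq_sum_range_succ (fun i j => ec r Ms i * PowerSeries.coeff (R := ℝ) j Vs)]
  apply Finset.sum_congr rfl
  intro j hj
  rw [coeff_Vs, mul_one]

lemma w_rec (r : ℝ) (n : ℕ) :
    ((n:ℝ)+1) * ec r Ms (n+1) = (r + n) * ec r Ms n := by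
  induction n with
  | zero =>
    have h := w_rec' r 0
    simpa using h
  | succ n ih =>
    have h1 := w_rec' r (n+1)
    have h2 := w_rec' r n
    rw [Finset.sum_range_succ] at h1
    push_cast at h1 h2 ⊢
    nlinarith [h1, h2, ih]

lemma w_gamma (hr : 0 < r) (n : ℕ) :
    ec r Ms n = Real.Gamma (r + n) / (Real.Gamma r * (n.factorial : ℝ)) := by
  induction n with
  | zero =>
    rw [ec_zero]
    simp [Real.Gamma_ne_zero (by intro m; nlinarith [Nat.cast_nonneg (α := ℝ) m] : ∀ m : ℕ, r ≠ -↑m)]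
  | succ n ih =>
    have hrn : r + (n:ℝ) ≠ 0 := by positivity
    have hG : Real.Gamma (r + (n+1:ℕ)) = (r + n) * Real.Gamma (r + n) := by
      push_cast
      rw [show r + ((n:ℝ)+1) = (r + n) + 1 by ring, Real.Gamma_add_one hrn]
    have hrec := w_rec r n
    have hn1 : ((n:ℝ)+1) ≠ 0 := by positivity
    have hfac : (((n+1).factorial : ℕ) : ℝ) = ((n:ℝ)+1) * (n.factorial : ℝ) := by
      rw [Nat.factorial_succ]; push_cast; ring
    have hGr : Real.Gamma r ≠ 0 := (Real.Gamma_pos_of_pos hr).ne'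
    have hf : (n.factorial : ℝ) ≠ 0 := by exact_mod_cast Nat.factorial_ne_zero n
    have : ec r Ms (n+1) = (r + n) * ec r Ms n / ((n:ℝ)+1) := by
      field_simp at hrec ⊢
      linarith [hrec]
    rw [this, ih, hG, hfac]
    field_simp

lemma ec_pos (hr : 0 < r) (n : ℕ) : 0 < ec r Lfs n := by
  rw [ec]
  apply Finset.sum_pos'
  · intro m _
    apply mul_nonneg _ (coeff_pow_nonneg coeff_Lfs_nonneg m n)
    positivity
  · refine ⟨n, Finset.self_mem_range_succ n, ?_⟩
    rw [coeff_pow_self constCoeff_Lfs n, coeff_Lfs_one]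
    have hf : (0:ℝ) < (n.factorial : ℝ) := by exact_mod_cast Nat.factorial_pos n
    positivity

lemma ec_lt (hr : 0 < r) (n : ℕ) (hn : 1 ≤ n) : ec r Lfs n < ec r Ms n := by
  rw [ec, ec]
  apply Finset.sum_lt_sum
  · intro m _
    apply mul_le_mul_of_nonneg_left (coeff_pow_mono coeff_Lfs_nonneg coeff_Lfs_le_Ms m n)
    positivity
  · refine ⟨n, Finset.self_mem_range_succ n, ?_⟩
    apply mul_lt_mul_of_pos_left
    · rw [coeff_pow_self constCoeff_Lfs n, coeff_pow_self constCoeff_Ms n,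
        coeff_Lfs_one, coeff_Ms_one, one_pow]
      exact pow_lt_one₀ (by norm_num) (by norm_num) (by omega)
    · have hf : (0:ℝ) < (n.factorial : ℝ) := by exact_mod_cast Nat.factorial_pos n
      positivity

lemma ec_one_Lf (n : ℕ) : ec 1 Lfs n = 1 / ((n:ℝ)+1) := by
  induction n using Nat.strong_induction_on with
  | _ n ih =>
    cases n with
    | zero => rw [ec_zero]; norm_num
    | succ n =>
      have h1 := ec_rec 1 Lfs constCoeff_Lfs n
      rw [dLfs, one_mul] at h1
      have h2 : ∑ p ∈ Finset.HasAntidiagonal.antidiagonal n, ec 1 Lfs p.1 * PowerSeries.coeff (R := ℝ) p.2 (Acs * Us)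
          = ∑ p ∈ Finset.HasAntidiagonal.antidiagonal n, PowerSeries.coeff (R := ℝ) p.1 f0s * PowerSeries.coeff (R := ℝ) p.2 (Acs * Us) := by
        apply Finset.sum_congr rfl
        intro p hp
        rw [Finset.HasAntidiagonal.mem_antidiagonal] at hp
        rw [ih p.1 (by omega), coeff_f0s]
      have h3 : ∑ p ∈ Finset.HasAntidiagonal.antidiagonal n, PowerSeries.coeff (R := ℝ) p.1 f0s * PowerSeries.coeff (R := ℝ) p.2 (Acs * Us)
          = PowerSeries.coeff (R := ℝ) n (f0s * (Acs * Us)) := (PowerSeries.coeff_mul n _ _).symm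
      have h4 : f0s * (Acs * Us) = (d⁄dX ℝ) f0s := by
        rw [← h3f]; ring
      have h5 : PowerSeries.coeff (R := ℝ) n ((d⁄dX ℝ) f0s) = PowerSeries.coeff (R := ℝ) (n+1) f0s * ((n:ℝ)+1) :=
        PowerSeries.coeff_derivative f0s n
      rw [h2, h3, h4, h5, coeff_f0s] at h1
      have hn1 : ((n:ℝ)+1) ≠ 0 := by positivity
      have h6 : ((n:ℝ) + 1) * ec 1 Lfs (n + 1) = ((n:ℝ)+1) * (1 / (((n+1:ℕ):ℝ)+1)) := by
        rw [h1]; ring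
      exact mul_left_cancel₀ hn1 h6




noncomputable def Lsum (x : ℝ) : ℝ := ∑' n, PowerSeries.coeff (R := ℝ) n Lfs * x ^ n

lemma summable_Lfs {x : ℝ} (hx0 : 0 ≤ x) (hx : x < 1) :
    Summable (fun n => PowerSeries.coeff (R := ℝ) n Lfs * x ^ n) := by
  apply Summable.of_nonneg_of_le
    (fun n => mul_nonneg (coeff_Lfs_nonneg n) (pow_nonneg hx0 n))
    (fun n => ?_) (summable_geometric_of_lt_one hx0 hx)
  calc PowerSeries.coeff (R := ℝ) n Lfs * x ^ n ≤ 1 * x ^ n :=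
        mul_le_mul_of_nonneg_right (coeff_Lfs_le_one n) (pow_nonneg hx0 n)
    _ = x ^ n := one_mul _

lemma hasSum_L {x : ℝ} (hx0 : 0 ≤ x) (hx : x < 1) :
    HasSum (fun n => PowerSeries.coeff (R := ℝ) n Lfs * x ^ n) (Lsum x) :=
  (summable_Lfs hx0 hx).hasSum

lemma hasSum_Lpow {x : ℝ} (hx0 : 0 ≤ x) (hx : x < 1) (m : ℕ) :
    HasSum (fun n => PowerSeries.coeff (R := ℝ) n (Lfs ^ m) * x ^ n) ((Lsum x) ^ m) := by
  induction m with
  | zero =>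
    rw [pow_zero]
    have h : HasSum (fun n => PowerSeries.coeff (R := ℝ) n (Lfs ^ 0) * x ^ n)
        (PowerSeries.coeff (R := ℝ) 0 (Lfs ^ 0) * x ^ 0) := by
      apply hasSum_single 0
      intro n hn
      rw [pow_zero, PowerSeries.coeff_one, if_neg hn, zero_mul]
    simpa using h
  | succ m ih =>
    have hnn : ∀ n, 0 ≤ PowerSeries.coeff (R := ℝ) n (Lfs ^ m) * x ^ n :=
      fun n => mul_nonneg (coeff_pow_nonneg coeff_Lfs_nonneg m n) (pow_nonneg hx0 n)
    have hnn' : ∀ n, 0 ≤ PowerSeries.coeff (R := ℝ) n Lfs * x ^ n :=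
      fun n => mul_nonneg (coeff_Lfs_nonneg n) (pow_nonneg hx0 n)
    have hf : Summable fun n => ‖PowerSeries.coeff (R := ℝ) n (Lfs ^ m) * x ^ n‖ := by
      apply ih.summable.congr
      intro n
      rw [Real.norm_of_nonneg (hnn n)]
    have hg : Summable fun n => ‖PowerSeries.coeff (R := ℝ) n Lfs * x ^ n‖ := by
      apply (summable_Lfs hx0 hx).congr
      intro n
      rw [Real.norm_of_nonneg (hnn' n)]
    have key := (summable_norm_sum_mul_antidiagonal_of_summable_norm hf hg).of_norm
    have heq : ∀ n : ℕ, (∑ p ∈ Finset.HasAntidiagonal.antidiagonal n,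
        (PowerSeries.coeff (R := ℝ) p.1 (Lfs ^ m) * x ^ p.1) * (PowerSeries.coeff (R := ℝ) p.2 Lfs * x ^ p.2))
        = PowerSeries.coeff (R := ℝ) n (Lfs ^ (m+1)) * x ^ n := by
      intro n
      rw [pow_succ, PowerSeries.coeff_mul, Finset.sum_mul]
      apply Finset.sum_congr rfl
      intro p hp
      rw [Finset.HasAntidiagonal.mem_antidiagonal] at hp
      rw [← hp, pow_add]
      ring
    have htsum := tsum_mul_tsum_eq_tsum_sum_antidiagonal_of_summable_norm hf hg
    rw [ih.tsum_eq, (hasSum_L hx0 hx).tsum_eq] at htsum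
    have hsummable : Summable (fun n => PowerSeries.coeff (R := ℝ) n (Lfs ^ (m+1)) * x ^ n) :=
      key.congr heq
    have hval : (Lsum x) ^ m * (Lsum x) = ∑' n, PowerSeries.coeff (R := ℝ) n (Lfs ^ (m+1)) * x ^ n :=
      htsum.trans (tsum_congr heq)
    have h2 : Lsum x ^ (m+1) = ∑' n, PowerSeries.coeff (R := ℝ) n (Lfs ^ (m+1)) * x ^ n := by
      rw [pow_succ]; exact hval
    have : HasSum (fun n => PowerSeries.coeff (R := ℝ) n (Lfs ^ (m+1)) * x ^ n) (Lsum x ^ (m+1)) := by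
      rw [h2]; exact hsummable.hasSum
    simpa [pow_succ] using this


lemma hasSum_ec {r x : ℝ} (hr : 0 < r) (hx0 : 0 ≤ x) (hx : x < 1) :
    HasSum (fun n => ec r Lfs n * x ^ n) (Real.exp (r * Lsum x)) := by
  set t : ℕ × ℕ → ℝ :=
    fun p => r ^ p.1 / (p.1.factorial : ℝ) * (PowerSeries.coeff (R := ℝ) p.2 (Lfs ^ p.1) * x ^ p.2) with ht_def
  have htnn : ∀ p, 0 ≤ t p := by
    intro p
    apply mul_nonneg _ (mul_nonneg (coeff_pow_nonneg coeff_Lfs_nonneg _ _) (pow_nonneg hx0 _))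
    positivity
  have rows : ∀ m : ℕ, HasSum (fun n => t (m, n)) (r ^ m / (m.factorial : ℝ) * (Lsum x) ^ m) :=
    fun m => (hasSum_Lpow hx0 hx m).mul_left _
  have rowsums : Summable (fun m => r ^ m / (m.factorial : ℝ) * (Lsum x) ^ m) := by
    apply (Real.summable_pow_div_factorial (r * Lsum x)).congr
    intro m
    rw [mul_pow]
    ring
  have ht : Summable t := by
    rw [summable_prod_of_nonneg htnn]
    constructor
    · exact fun m => (rows m).summable
    · apply rowsums.congr
      intro m
      exact ((rows m).tsum_eq).symm
  have hexp : ∑' p, t p = Real.exp (r * Lsum x) := by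
    rw [Summable.tsum_prod' ht (fun m => (rows m).summable)]
    have h1 : ∀ m : ℕ, ∑' n, t (m, n) = (r * Lsum x) ^ m / (m.factorial : ℝ) := by
      intro m
      rw [(rows m).tsum_eq, mul_pow]
      ring
    rw [tsum_congr h1]
    rw [Real.exp_eq_exp_ℝ, NormedSpace.exp_eq_tsum_div]
  have htsum : HasSum t (Real.exp (r * Lsum x)) := by
    have := ht.hasSum
    rwa [hexp] at this
  have hswap : HasSum (fun p : ℕ × ℕ => t (p.2, p.1)) (Real.exp (r * Lsum x)) := by
    have := (Equiv.prodComm ℕ ℕ).hasSum_iff.mpr htsum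
    exact this.congr (fun p => rfl)
  apply hswap.prod_fiberwise
  intro n
  have hfin : HasSum (fun m => t (m, n)) (∑ m ∈ Finset.range (n+1), t (m, n)) := by
    apply hasSum_sum_of_ne_finset_zero
    intro m hm
    rw [Finset.mem_range] at hm
    have : n < m := by omega
    simp only [ht_def]
    rw [coeff_pow_zero_of_lt constCoeff_Lfs m n this]
    ring
  have hval : ∑ m ∈ Finset.range (n+1), t (m, n) = ec r Lfs n * x ^ n := by
    rw [ec, Finset.sum_mul]
    apply Finset.sum_congr rfl
    intro m _
    simp only [ht_def]
    ring
  rw [← hval]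
  exact hfin



lemma head_zero_of_hasSum_zero {b : ℕ → ℝ} {ε : ℝ} (hε : 0 < ε)
    (h : ∀ u : ℝ, 0 < u → u < ε → HasSum (fun k => b k * u ^ k) 0) : b 0 = 0 := by
  obtain ⟨u₁, hu₁, hu₁ε⟩ : ∃ u₁ : ℝ, 0 < u₁ ∧ u₁ < ε := ⟨ε/2, by positivity, by linarith⟩
  have hsum₁ := h u₁ hu₁ hu₁ε
  have htend : Filter.Tendsto (fun k => |b k * u₁ ^ k|) Filter.atTop (nhds 0) := by
    have := hsum₁.summable.tendsto_atTop_zero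
    simpa using this.abs
  obtain ⟨C, hC⟩ := htend.bddAbove_range
  have hC' : ∀ k, |b k * u₁ ^ k| ≤ C := by
    intro k
    exact hC (Set.mem_range_self k)
  have hC0 : 0 ≤ C := le_trans (abs_nonneg _) (hC' 0)
  have key : ∀ u : ℝ, 0 < u → u ≤ u₁ / 2 → |b 0| ≤ (2 * C / u₁) * u := by
    intro u hu hu2
    set q : ℝ := u / u₁ with hq_def
    have hq0 : 0 < q := by positivity
    have hq2 : q ≤ 1/2 := by
      rw [hq_def, div_le_iff₀ hu₁]; linarith
    have hq1 : q < 1 := by linarith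
    have hsum := h u hu (by linarith)
    have hz : (-(b 0 * u ^ 0)) + ∑ i ∈ Finset.range 1, b i * u ^ i = 0 := by simp
    have h1 : HasSum (fun j => b (j+1) * u ^ (j+1)) (-(b 0 * u ^ 0)) := by
      apply (hasSum_nat_add_iff (f := fun k => b k * u ^ k) 1).2
      rw [hz]
      exact hsum
    have hle : ∀ j : ℕ, |b (j+1) * u ^ (j+1)| ≤ (C * q) * q ^ j := by
      intro j
      have hb : |b (j+1)| * u₁ ^ (j+1) ≤ C := by
        have := hC' (j+1)
        rwa [abs_mul, abs_pow, abs_of_pos hu₁] at this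
      have hupos : (0:ℝ) < u₁ ^ (j+1) := by positivity
      have hb' : |b (j+1)| ≤ C / u₁ ^ (j+1) := by
        rw [le_div_iff₀ hupos]; exact hb
      calc |b (j+1) * u ^ (j+1)| = |b (j+1)| * u ^ (j+1) := by
            rw [abs_mul, abs_pow, abs_of_pos hu]
        _ ≤ (C / u₁ ^ (j+1)) * u ^ (j+1) :=
            mul_le_mul_of_nonneg_right hb' (by positivity)
        _ = C * q ^ (j+1) := by
            rw [hq_def, div_pow]
            ring
        _ = (C * q) * q ^ j := by rw [pow_succ]; ring
    have hgsum : Summable (fun j : ℕ => (C * q) * q ^ j) :=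
      (summable_geometric_of_lt_one hq0.le hq1).mul_left _
    have hfabs : Summable (fun j => |b (j+1) * u ^ (j+1)|) :=
      Summable.of_nonneg_of_le (fun j => abs_nonneg _) hle hgsum
    have habs : |b 0| = |∑' j, b (j+1) * u ^ (j+1)| := by
      rw [h1.tsum_eq]
      simp
    rw [habs]
    calc |∑' j, b (j+1) * u ^ (j+1)| ≤ ∑' j, |b (j+1) * u ^ (j+1)| := by
          have hs : Summable fun j => ‖b (j+1) * u ^ (j+1)‖ :=
            hfabs.congr fun j => (Real.norm_eq_abs _).symm
          have hn := norm_tsum_le_tsum_norm (f := fun j => b (j+1) * u ^ (j+1)) hs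
          simp only [Real.norm_eq_abs] at hn
          exact hn
      _ ≤ ∑' j, (C * q) * q ^ j := Summable.tsum_le_tsum hle hfabs hgsum
      _ = (C * q) * (1 - q)⁻¹ := by
          rw [tsum_mul_left, tsum_geometric_of_lt_one hq0.le hq1]
      _ ≤ (C * q) * 2 := by
          apply mul_le_mul_of_nonneg_left _ (by positivity)
          rw [inv_le_comm₀ (by linarith) (by norm_num)]
          linarith
      _ = (2 * C / u₁) * u := by
          rw [hq_def]
          field_simp
  by_contra hb0
  have hpos : 0 < |b 0| := abs_pos.mpr hb0
  set u : ℝ := min (u₁/2) (|b 0| * u₁ / (4 * C + 1)) with hu_def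
  have hu : 0 < u := by
    apply lt_min (by positivity)
    positivity
  have h1 := key u hu (min_le_left _ _)
  have h2 : u ≤ |b 0| * u₁ / (4 * C + 1) := min_le_right _ _
  have h3 : (2 * C / u₁) * u ≤ (2 * C / u₁) * (|b 0| * u₁ / (4 * C + 1)) :=
    mul_le_mul_of_nonneg_left h2 (by positivity)
  have h4 : (2 * C / u₁) * (|b 0| * u₁ / (4 * C + 1)) = |b 0| * (2 * C / (4 * C + 1)) := by
    field_simp
  have h5 : 2 * C / (4 * C + 1) < 1/2 := by
    rw [div_lt_iff₀ (by positivity)]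
    linarith
  nlinarith [h1, h3, h4, h5, hpos]

lemma all_zero_of_hasSum_zero {b : ℕ → ℝ} {ε : ℝ} (hε : 0 < ε)
    (h : ∀ u : ℝ, 0 < u → u < ε → HasSum (fun k => b k * u ^ k) 0) : ∀ k, b k = 0 := by
  intro k
  induction k using Nat.strong_induction_on with
  | _ k ih =>
    have hshift : ∀ u : ℝ, 0 < u → u < ε → HasSum (fun j => b (j + k) * u ^ j) 0 := by
      intro u hu huε
      have hsum := h u hu huε
      have hz : ∑ i ∈ Finset.range k, b i * u ^ i = 0 :=
        Finset.sum_eq_zero fun i hi => by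
          rw [ih i (Finset.mem_range.mp hi), zero_mul]
      have h1 : HasSum (fun j => b (j + k) * u ^ (j + k)) 0 := by
        apply (hasSum_nat_add_iff (f := fun i => b i * u ^ i) k).2
        rw [hz, add_zero]
        exact hsum
      have h2 : HasSum (fun j => (b (j + k) * u ^ j) * u ^ k) 0 := by
        have hfun : (fun j => b (j + k) * u ^ (j + k)) = fun j => (b (j + k) * u ^ j) * u ^ k := by
          funext j
          rw [pow_add]
          ring
        rwa [hfun] at h1
      have h3 := h2.div_const (u ^ k)
      have hne : u ^ k ≠ 0 := by positivity
      have h4 : (fun j => (b (j + k) * u ^ j) * u ^ k / u ^ k) = fun j => b (j + k) * u ^ j := by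
        funext j
        rw [mul_div_cancel_right₀ _ hne]
      rw [h4, zero_div] at h3
      exact h3
    have := head_zero_of_hasSum_zero hε hshift
    simpa using this


lemma hasSum_f0 {x : ℝ} (hx0 : 0 < x) (hx1 : x < 1) :
    HasSum (fun n : ℕ => 1/((n:ℝ)+1) * x^n) (-Real.log (1-x)/x) := by
  have h := Real.hasSum_pow_div_log_of_abs_lt_one (x := x) (by rw [abs_of_pos hx0]; exact hx1)
  have h2 := h.div_const x
  have hfun : (fun n : ℕ => x^(n+1)/((n:ℝ)+1)/x) = fun n : ℕ => 1/((n:ℝ)+1)*x^n := by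
    funext n
    rw [pow_succ]
    field_simp
  rwa [hfun] at h2

lemma exp_Lsum {x : ℝ} (hx0 : 0 < x) (hx1 : x < 1) :
    Real.exp (Lsum x) = -Real.log (1-x)/x := by
  have h1 := hasSum_ec (r := 1) one_pos hx0.le hx1
  have hfun : (fun n => ec 1 Lfs n * x ^ n) = fun n : ℕ => 1/((n:ℝ)+1) * x^n := by
    funext n
    rw [ec_one_Lf]
  rw [hfun] at h1
  have h2 := hasSum_f0 hx0 hx1
  have := h1.unique h2
  rw [one_mul] at this
  exact this

end Stmt17

theorem stmt_17 (ρ : ℝ) (hρ : ρ ∈ Set.Ioc (0 : ℝ) 1) (r : ℝ) (hr : 0 < r)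
    (c : ℕ → ℝ)
    (hc : ∃ ε : ℝ, 0 < ε ∧ ∀ u : ℝ, 0 < u → u < ε →
      HasSum (fun k : ℕ => c (k + 1) * u ^ (k + 1))
        ((-Real.log (1 - ρ * u) / (ρ * u)) ^ r - 1)) :
    ∀ k : ℕ,
      0 < c (k + 1) ∧
        c (k + 1) <
          Real.Gamma (r + (k : ℝ) + 1) / (Real.Gamma r * (Nat.factorial (k + 1) : ℝ)) *
            ρ ^ (k + 1) := by
  open Stmt17 in
  obtain ⟨hρ0, hρ1⟩ := hρ
  obtain ⟨ε, hε, hc⟩ := hc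
  have hε'pos : 0 < min ε 1 := lt_min hε one_pos
  set b : ℕ → ℝ := fun k => c (k+1) - ec r Lfs (k+1) * ρ ^ (k+1) with hb_def
  have key : ∀ u : ℝ, 0 < u → u < min ε 1 → HasSum (fun k => b k * u ^ k) 0 := by
    intro u hu huε
    have hu1 : u < 1 := lt_of_lt_of_le huε (min_le_right _ _)
    have huε2 : u < ε := lt_of_lt_of_le huε (min_le_left _ _)
    have hx0 : 0 < ρ * u := by positivity
    have hx1 : ρ * u < 1 := by nlinarith
    have h1 : HasSum (fun n => ec r Lfs n * (ρ*u)^n) (Real.exp (r * Lsum (ρ*u))) :=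
      hasSum_ec hr hx0.le hx1
    have hval : Real.exp (r * Lsum (ρ*u)) = (-Real.log (1 - ρ*u) / (ρ*u)) ^ r := by
      rw [← exp_Lsum hx0 hx1, ← Real.exp_mul, mul_comm]
    rw [hval] at h1
    have h0 : ec r Lfs 0 * (ρ*u)^0 = 1 := by rw [ec_zero]; ring
    have h3 : HasSum (fun k => ec r Lfs (k+1) * (ρ*u)^(k+1))
        ((-Real.log (1 - ρ*u) / (ρ*u)) ^ r - 1) := by
      apply (hasSum_nat_add_iff (f := fun n => ec r Lfs n * (ρ*u)^n) 1).2
      have : ∑ i ∈ Finset.range 1, ec r Lfs i * (ρ*u)^i = 1 := by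
        rw [Finset.sum_range_one, h0]
      rw [this, sub_add_cancel]
      exact h1
    have h4 := hc u hu huε2
    have h5 := h4.sub h3
    rw [sub_self] at h5
    have h6 : (fun k => (b k * u ^ k) * u) =
        fun k => c (k+1) * u^(k+1) - ec r Lfs (k+1) * (ρ*u)^(k+1) := by
      funext k
      rw [hb_def, mul_pow, pow_succ]
      ring
    rw [← h6] at h5
    have h7 := h5.div_const u
    have h8 : (fun k => (b k * u ^ k) * u / u) = fun k => b k * u ^ k := by
      funext k
      rw [mul_div_cancel_right₀ _ hu.ne']
    rwa [h8, zero_div] at h7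
  have hzero := all_zero_of_hasSum_zero hε'pos key
  intro k
  have hck : c (k+1) = ec r Lfs (k+1) * ρ ^ (k+1) := by
    have h := hzero k
    rw [hb_def] at h
    simp only at h
    linarith
  have hρpow : 0 < ρ ^ (k+1) := by positivity
  constructor
  · rw [hck]
    exact mul_pos (ec_pos hr (k+1)) hρpow
  · rw [hck]
    have hlt : ec r Lfs (k+1) < ec r Ms (k+1) := ec_lt hr (k+1) (by omega)
    have hgamma : ec r Ms (k+1) = Real.Gamma (r + (k:ℝ) + 1) / (Real.Gamma r * ((k+1).factorial : ℝ)) := by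
      rw [w_gamma hr (k+1)]
      push_cast
      ring_nf
    rw [← hgamma]
    exact mul_lt_mul_of_pos_right hlt hρpow
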